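/- Let G be a non-trivial group and let 𝒞 be a compression family for G. Then for all A, B ∈ 𝒞 there exists g ∈ G such that [A, gBg⁻¹] = {1}. -/
import Mathlib


namespace Paper

variable {G : Type*} [Group G]

/-- Conjugate of a subgroup: `g A g⁻¹`. -/
def conjS (g : G) (A : Subgroup G) : Subgroup G := A.map (MulAut.conj g).toMonoidHom

/-- The family is invariant under conjugation in `G`. -/
def ConjInvariant (C : Set (Subgroup G)) : Prop := ∀ (g : G), ∀ A ∈ C, conjS g A ∈ C

/-- Condition (A): every member of the family is non-abelian. -/
def CondA (C : Set (Subgroup G)) : Prop :=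
  ∀ A ∈ C, ∃ a ∈ A, ∃ b ∈ A, a * b ≠ b * a

/-- Condition (B): for every nontrivial element `g` of `H` there is a member `A` of the
family with `[A, gAg⁻¹] = 1`. -/
def CondB (C : Set (Subgroup G)) (H : Subgroup G) : Prop :=
  ∀ g ∈ H, g ≠ 1 → ∃ A ∈ C, ⁅A, conjS g A⁆ = (⊥ : Subgroup G)

/-- Condition (C): `H` is semi-transitive on the family. -/
def CondC (C : Set (Subgroup G)) (H : Subgroup G) : Prop :=
  ∀ A ∈ C, ∀ B ∈ C, ∃ g ∈ H, conjS g A ≤ B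

/-- Condition (D): the family is joinable. -/
def CondD (C : Set (Subgroup G)) : Prop :=
  ∀ A ∈ C, ∀ B ∈ C, ∀ C' ∈ C, ⁅A, C'⁆ = (⊥ : Subgroup G) → ¬ C' ≤ B →
    ∃ D ∈ C, A ⊔ B ≤ D

/-- Condition (E): the family is shiftable over `H`: for each `A` in the family there is
`g ∈ H` and a homomorphism from the unrestricted direct product `∏_{i ≥ 1} A` into `H`
restricting to the identity on the first factor, which `g` conjugates by the shift. -/
def CondE (C : Set (Subgroup G)) (H : Subgroup G) : Prop :=
  ∀ A ∈ C, ∃ g ∈ H, ∃ φ : (ℕ → A) →* G,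
    (∀ f : ℕ → A, φ f ∈ H) ∧
    (∀ a : A, φ (fun i => if i = 0 then a else 1) = (a : G)) ∧
    (∀ f : ℕ → A, g * φ f * g⁻¹ = φ (fun i => match i with | 0 => 1 | (n+1) => f n))

/-- Conditions (A)–(C): a compression family for `H`. -/
def IsCompressionFamily (C : Set (Subgroup G)) (H : Subgroup G) : Prop :=
  ConjInvariant C ∧ CondA C ∧ CondB C H ∧ CondC C H

/-- Conditions (A)–(D): a joinable compression family for `H`. -/
def IsJoinableCompressionFamily (C : Set (Subgroup G)) (H : Subgroup G) : Prop :=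
  IsCompressionFamily C H ∧ CondD C

/-- Conditions (A)–(E): a shift-joinable compression family for `H`. -/
def IsShiftJoinableCompressionFamily (C : Set (Subgroup G)) (H : Subgroup G) : Prop :=
  IsJoinableCompressionFamily C H ∧ CondE C H

lemma conjS_conjS (a b : G) (A : Subgroup G) : conjS a (conjS b A) = conjS (a * b) A := by
  unfold conjS
  rw [Subgroup.map_map]
  congr 1
  ext x
  simp [mul_assoc]

lemma conjS_one (A : Subgroup G) : conjS (1 : G) A = A := by
  unfold conjS
  ext x
  simp

lemma conjS_bot (g : G) : conjS g (⊥ : Subgroup G) = ⊥ := by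
  unfold conjS
  simp

lemma conjS_commutator (g : G) (A B : Subgroup G) :
    conjS g ⁅A, B⁆ = ⁅conjS g A, conjS g B⁆ := by
  unfold conjS
  exact Subgroup.map_commutator A B _

/-- Lemma (double commutator, part (i)): if 𝒞 is a compression family for `G`, then for
all `A, B ∈ 𝒞` there exists `g ∈ G` with `[A, gBg⁻¹] = 1`. -/
theorem exists_commuting_conjugate [Nontrivial G] (C : Set (Subgroup G))
    (hC : IsCompressionFamily C (⊤ : Subgroup G)) :
    ∀ A ∈ C, ∀ B ∈ C, ∃ g : G, ⁅A, conjS g B⁆ = (⊥ : Subgroup G) := by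
  intro A hA B hB
  obtain ⟨h, hh⟩ := exists_ne (1 : G)
  obtain ⟨D, hD, hDcomm⟩ := hC.2.2.1 h trivial hh
  obtain ⟨g1, -, hg1⟩ := hC.2.2.2 A hA D hD
  obtain ⟨g2, -, hg2⟩ := hC.2.2.2 B hB (conjS h D) (hC.1 h D hD)
  refine ⟨g1⁻¹ * g2, ?_⟩
  have key : conjS g1 ⁅A, conjS (g1⁻¹ * g2) B⁆ = ⊥ := by
    rw [conjS_commutator, conjS_conjS, mul_inv_cancel_left]
    rw [← le_bot_iff, ← hDcomm]
    exact Subgroup.commutator_mono hg1 hg2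
  have := congrArg (conjS g1⁻¹) key
  rwa [conjS_conjS, inv_mul_cancel, conjS_one, conjS_bot] at this

end Paper
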